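/- Let C₁, C₂, D₁, D₂ be invertible k×k complex matrices satisfying D₁⁻¹C₂* = −C₁⁻¹D₂* and C₁C₂ = −D₂*D₁*. Then the matrix H = D₁⁻¹C₂* is Hermitian (H = H*). -/
import Mathlib


open Matrix

theorem factorisation_hermitian_step {k : ℕ}
    (C₁ C₂ D₁ D₂ : Matrix (Fin k) (Fin k) ℂ)
    (hC₁ : IsUnit C₁.det) (hC₂ : IsUnit C₂.det)
    (hD₁ : IsUnit D₁.det) (hD₂ : IsUnit D₂.det)
    (h1 : D₁⁻¹ * C₂ᴴ = -(C₁⁻¹ * D₂ᴴ))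
    (h2 : C₁ * C₂ = -(D₂ᴴ * D₁ᴴ)) :
    (D₁⁻¹ * C₂ᴴ)ᴴ = D₁⁻¹ * C₂ᴴ := by
  have hD₁H : IsUnit D₁ᴴ.det := by
    rw [Matrix.det_conjTranspose]; exact hD₁.star
  have hC2 : C₂ = C₁⁻¹ * -(D₂ᴴ * D₁ᴴ) := by
    rw [← h2, ← Matrix.mul_assoc, Matrix.nonsing_inv_mul _ hC₁, Matrix.one_mul]
  calc (D₁⁻¹ * C₂ᴴ)ᴴ = C₂ * (D₁ᴴ)⁻¹ := by
        rw [Matrix.conjTranspose_mul, Matrix.conjTranspose_conjTranspose,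
          Matrix.conjTranspose_nonsing_inv]
    _ = -(C₁⁻¹ * D₂ᴴ) := by
        rw [hC2, Matrix.mul_neg, Matrix.neg_mul, Matrix.mul_assoc, Matrix.mul_assoc,
          Matrix.mul_nonsing_inv _ hD₁H, Matrix.mul_one]
    _ = D₁⁻¹ * C₂ᴴ := h1.symm
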